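/- For fixed r ≥ 1, n ≥ 0, and k ≥ 0, p(n - (r·k(k+1)/2 - k)) equals the number of partitions λ of n satisfying g_r(λ) ≥ k and g_{r-1}(λ) > k. -/

import Mathlib

open scoped Classical

/-- `pI m` is the number of partitions of `m`, with `pI m = 0` for `m < 0`. -/
noncomputable def pI (m : ℤ) : ℕ := if 0 ≤ m then Nat.card (Nat.Partition m.toNat) else 0

/-- The `k`-th triangular number. -/
def T (k : ℕ) : ℕ := k * (k + 1) / 2

/-- The least `r`-gap of a partition: the smallest positive integer appearing
fewer than `r` times as a part; `gap 0 = ⊤` by convention. -/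
noncomputable def gap (r : ℕ) {n : ℕ} (lam : Nat.Partition n) : ℕ∞ :=
  if r = 0 then ⊤ else (sInf {i : ℕ | 0 < i ∧ lam.parts.count i < r} : ℕ)

/-- `S r n` is the sum of the least `r`-gaps over all partitions of `n`. -/
noncomputable def S (r n : ℕ) : ℕ := ∑ lam : Nat.Partition n, (gap r lam).toNat

/-- `G r n` is the number of partitions `lam` of `n` with `gap r lam < gap (r-1) lam`. -/
noncomputable def G (r n : ℕ) : ℕ :=
  Nat.card {lam : Nat.Partition n // gap r lam < gap (r-1) lam}

/-- `U r n` is the number of partitions of `n` into parts not congruent to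
`0`, `r`, or `3r` modulo `4r`. -/
noncomputable def U (r n : ℕ) : ℕ :=
  Nat.card {lam : Nat.Partition n //
    ∀ i ∈ lam.parts, i % (4*r) ≠ 0 ∧ i % (4*r) ≠ r % (4*r) ∧ i % (4*r) ≠ (3*r) % (4*r)}

/-- `qD m` is the number of partitions of `m` into distinct parts. -/
noncomputable def qD (m : ℕ) : ℕ := Nat.card {lam : Nat.Partition m // lam.parts.Nodup}

/-- `pe n` is the number of partitions of `n` into an even number of parts. -/
noncomputable def pe (n : ℕ) : ℕ :=
  Nat.card {lam : Nat.Partition n // Even (Multiset.card lam.parts)}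

/-- `R n` is the number of partitions of `n` with nonnegative rank
(largest part minus number of parts is `≥ 0`). -/
noncomputable def R (n : ℕ) : ℕ :=
  Nat.card {lam : Nat.Partition n // (Multiset.card lam.parts : ℤ) ≤ (lam.parts.sup : ℤ)}

/-- The crank of a partition. -/
noncomputable def crank {n : ℕ} (lam : Nat.Partition n) : ℤ :=
  if lam.parts.count 1 = 0 then (lam.parts.sup : ℤ)
  else (Multiset.card (lam.parts.filter (fun x => lam.parts.count 1 < x)) : ℤ)
        - lam.parts.count 1

/-- `C n` is the number of partitions of `n` with nonnegative crank. -/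
noncomputable def C (n : ℕ) : ℕ := Nat.card {lam : Nat.Partition n // 0 ≤ crank lam}

open Multiset

noncomputable def Mset (r k : ℕ) : Multiset ℕ :=
  (Multiset.range k).bind (fun i => Multiset.replicate (if i + 1 = k then r - 1 else r) (i + 1))

lemma Mset_count (r k j : ℕ) :
    (Mset r k).count j = if 0 < j ∧ j ≤ k then (if j = k then r - 1 else r) else 0 := by
  unfold Mset
  rw [Multiset.count_bind]
  by_cases h : 0 < j ∧ j ≤ k
  · rw [if_pos h]
    obtain ⟨h1, h2⟩ := h
    have hj : j - 1 ∈ Multiset.range k := by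
      rw [Multiset.mem_range]; omega
    rw [show (Multiset.range k) = (j-1) ::ₘ ((Multiset.range k).erase (j-1)) from
      (Multiset.cons_erase hj).symm]
    rw [Multiset.map_cons, Multiset.sum_cons]
    have hj1 : j - 1 + 1 = j := by omega
    rw [hj1, Multiset.count_replicate, if_pos rfl]
    have hz : ((((Multiset.range k).erase (j-1)).map
        (fun i => (Multiset.replicate (if i + 1 = k then r - 1 else r) (i + 1)).count j))).sum = 0 := by
      rw [Multiset.sum_eq_zero]
      intro x hx
      simp only [Multiset.mem_map] at hx
      obtain ⟨i, hi, rfl⟩ := hx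
      have hne : i + 1 ≠ j := by
        have := Multiset.Nodup.mem_erase_iff (Multiset.nodup_range k) |>.mp hi
        omega
      rw [Multiset.count_replicate, if_neg (by omega : ¬ i + 1 = j)]
    rw [hz, add_zero]
  · rw [if_neg h]
    rw [Multiset.sum_eq_zero]
    intro x hx
    simp only [Multiset.mem_map, Multiset.mem_range] at hx
    obtain ⟨i, hi, rfl⟩ := hx
    rw [Multiset.count_replicate, if_neg]
    omega

lemma Mset_pos (r k : ℕ) : ∀ x ∈ Mset r k, 0 < x := by
  intro x hx
  unfold Mset at hx
  simp only [Multiset.mem_bind, Multiset.mem_range, Multiset.mem_replicate] at hx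
  omega

lemma Mset_sum (r k : ℕ) (hr : 1 ≤ r) : (Mset r k).sum + k = r * (k * (k + 1) / 2) := by
  obtain ⟨s, rfl⟩ : ∃ s, r = s + 1 := ⟨r - 1, by omega⟩
  cases k with
  | zero => simp [Mset]
  | succ m =>
    unfold Mset
    rw [Multiset.range_succ, Multiset.cons_bind, Multiset.sum_add]
    have hhead : (Multiset.replicate (if m + 1 = m + 1 then s + 1 - 1 else s + 1) (m + 1)).sum
        = s * (m + 1) := by
      rw [if_pos rfl, Multiset.sum_replicate, smul_eq_mul]; simp
    rw [hhead]
    have hmap : ((Multiset.range m).bind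
        (fun i => Multiset.replicate (if i + 1 = m + 1 then s + 1 - 1 else s + 1) (i + 1))).sum
        = ∑ i ∈ Finset.range m, (s + 1) * (i + 1) := by
      rw [Multiset.sum_bind]
      rw [Finset.sum_eq_multiset_sum]
      rw [show (Finset.range m).val = Multiset.range m from Finset.range_val m]
      congr 1
      apply Multiset.map_congr rfl
      intro i hi
      rw [Multiset.mem_range] at hi
      rw [if_neg (by omega), Multiset.sum_replicate, smul_eq_mul]
    rw [hmap]
    have hg : ∑ i ∈ Finset.range m, (s + 1) * (i + 1)
        = (s + 1) * (∑ i ∈ Finset.range m, i + m) := by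
      rw [← Finset.mul_sum]
      congr 1
      rw [Finset.sum_add_distrib]
      simp
    rw [hg, Finset.sum_range_id m]
    have h2 : 2 * (m * (m - 1) / 2) = m * (m - 1) := by
      have he : Even (m * (m - 1)) := by
        cases m with
        | zero => simp
        | succ p => simpa [Nat.mul_comm] using Nat.even_mul_succ_self p
      exact Nat.two_mul_div_two_of_even he
    have h3 : 2 * ((m + 1) * (m + 1 + 1) / 2) = (m + 1) * (m + 1 + 1) := by
      exact Nat.two_mul_div_two_of_even (Nat.even_mul_succ_self (m + 1))
    have hmm : (m + 1) * (m + 1 + 1) = m * (m - 1) + 4 * m + 2 := by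
      cases m with
      | zero => simp
      | succ p => rw [Nat.add_sub_cancel]; ring
    set a := m * (m - 1) / 2 with ha
    set b := (m + 1) * (m + 1 + 1) / 2 with hb
    have hab : b = a + 2 * m + 1 := by omega
    rw [hab]
    ring

lemma Mset_le_iff (r k : ℕ) (s : Multiset ℕ) :
    Mset r k ≤ s ↔ (∀ j, 0 < j → j < k → r ≤ s.count j) ∧ (0 < k → r - 1 ≤ s.count k) := by
  rw [Multiset.le_iff_count]
  constructor
  · intro h
    refine ⟨fun j hj hjk => ?_, fun hk => ?_⟩
    · have := h j
      rw [Mset_count, if_pos ⟨hj, le_of_lt hjk⟩, if_neg (Nat.ne_of_lt hjk)] at this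
      exact this
    · have := h k
      rw [Mset_count, if_pos ⟨hk, le_refl k⟩, if_pos rfl] at this
      exact this
  · rintro ⟨h1, h2⟩ j
    rw [Mset_count]
    by_cases hh : 0 < j ∧ j ≤ k
    · rw [if_pos hh]
      by_cases hjk : j = k
      · rw [if_pos hjk, hjk]
        exact h2 (hjk ▸ hh.1)
      · rw [if_neg hjk]
        exact h1 j hh.1 (lt_of_le_of_ne hh.2 hjk)
    · rw [if_neg hh]
      exact Nat.zero_le _

lemma count_top_eq_zero {n : ℕ} (lam : Nat.Partition n) : lam.parts.count (n + 1) = 0 := by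
  rw [Multiset.count_eq_zero]
  intro hmem
  have h1 : n + 1 ≤ lam.parts.sum :=
    Multiset.single_le_sum (fun x _ => Nat.zero_le x) _ hmem
  rw [lam.parts_sum] at h1
  omega

lemma gap_le_iff {n : ℕ} (r k : ℕ) (hr : 1 ≤ r) (lam : Nat.Partition n) :
    (k : ℕ∞) ≤ gap r lam ↔ ∀ j, 0 < j → j < k → r ≤ lam.parts.count j := by
  unfold gap
  rw [if_neg (by omega : ¬ r = 0), Nat.cast_le]
  have hS : {i : ℕ | 0 < i ∧ lam.parts.count i < r}.Nonempty :=
    ⟨n + 1, ⟨by omega, by have := count_top_eq_zero lam; omega⟩⟩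
  constructor
  · intro h j hj hjk
    by_contra hc
    have hmem : j ∈ {i : ℕ | 0 < i ∧ lam.parts.count i < r} := ⟨hj, by omega⟩
    have := Nat.sInf_le hmem
    omega
  · intro h
    apply le_csInf hS
    rintro b ⟨hb1, hb2⟩
    by_contra hc
    have := h b hb1 (by omega)
    omega

lemma gap_lt_iff {n : ℕ} (r k : ℕ) (hr : 1 ≤ r) (lam : Nat.Partition n) :
    (k : ℕ∞) < gap (r - 1) lam ↔ ∀ j, 0 < j → j ≤ k → r - 1 ≤ lam.parts.count j := by
  rcases Nat.lt_or_ge r 2 with h1 | h2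
  · have : r = 1 := by omega
    subst this
    simp only [Nat.sub_self]
    unfold gap
    rw [if_pos rfl]
    constructor
    · intro _ j _ _; exact Nat.zero_le _
    · intro _
      exact WithTop.coe_lt_top k
  · unfold gap
    rw [if_neg (by omega : ¬ r - 1 = 0), Nat.cast_lt]
    have hS : {i : ℕ | 0 < i ∧ lam.parts.count i < r - 1}.Nonempty :=
      ⟨n + 1, ⟨by omega, by have := count_top_eq_zero lam; omega⟩⟩
    constructor
    · intro h j hj hjk
      by_contra hc
      have hmem : j ∈ {i : ℕ | 0 < i ∧ lam.parts.count i < r - 1} := ⟨hj, by omega⟩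
      have := Nat.sInf_le hmem
      omega
    · intro h
      rw [Nat.lt_iff_add_one_le]
      apply le_csInf hS
      rintro b ⟨hb1, hb2⟩
      by_contra hc
      have := h b hb1 (by omega)
      omega

lemma cond_iff {n : ℕ} (r k : ℕ) (hr : 1 ≤ r) (lam : Nat.Partition n) :
    ((k : ℕ∞) ≤ gap r lam ∧ (k : ℕ∞) < gap (r - 1) lam) ↔ Mset r k ≤ lam.parts := by
  rw [gap_le_iff r k hr lam, gap_lt_iff r k hr lam, Mset_le_iff]
  constructor
  · rintro ⟨h1, h2⟩
    exact ⟨h1, fun hk => h2 k hk le_rfl⟩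
  · rintro ⟨h1, h2⟩
    refine ⟨h1, fun j hj hjk => ?_⟩
    rcases Nat.lt_or_ge j k with hlt | hge
    · have := h1 j hj hlt; omega
    · have : j = k := by omega
      subst this
      exact h2 hj

noncomputable def partEquiv (r k n : ℕ) (h : (Mset r k).sum ≤ n) :
    {lam : Nat.Partition n // Mset r k ≤ lam.parts} ≃ Nat.Partition (n - (Mset r k).sum) where
  toFun lam := ⟨lam.1.parts - Mset r k,
    fun hi => lam.1.parts_pos (Multiset.mem_of_le (tsub_le_self) hi),
    by
      have hadd : (lam.1.parts - Mset r k) + Mset r k = lam.1.parts :=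
        tsub_add_cancel_of_le lam.2
      have := congrArg Multiset.sum hadd
      rw [Multiset.sum_add, lam.1.parts_sum] at this
      omega⟩
  invFun mu := ⟨⟨mu.parts + Mset r k,
    fun hi => by
      rcases Multiset.mem_add.mp hi with h' | h'
      · exact mu.parts_pos h'
      · exact Mset_pos r k _ h',
    by rw [Multiset.sum_add, mu.parts_sum]; omega⟩,
    by simp⟩
  left_inv lam := by
    apply Subtype.ext
    apply Nat.Partition.ext
    simp [tsub_add_cancel_of_le lam.2]
  right_inv mu := by
    apply Nat.Partition.ext
    simp


theorem stmt10 (r n k : ℕ) (hr : 1 ≤ r) :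
    pI ((n : ℤ) - ((r : ℤ) * ((k : ℤ) * (k + 1) / 2) - k))
      = Nat.card {lam : Nat.Partition n //
          (k : ℕ∞) ≤ gap r lam ∧ (k : ℕ∞) < gap (r - 1) lam} := by
  have hTsum : (Mset r k).sum + k = r * (k * (k + 1) / 2) := Mset_sum r k hr
  have hd : (k : ℤ) * ((k : ℤ) + 1) / 2 = ((k * (k + 1) / 2 : ℕ) : ℤ) := by
    rw [Int.natCast_ediv]
    congr 1 <;> push_cast <;> ring
  have harg : (n : ℤ) - ((r : ℤ) * ((k : ℤ) * (k + 1) / 2) - k)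
      = (n : ℤ) - ((Mset r k).sum : ℤ) := by
    rw [hd]
    have hcast : ((Mset r k).sum : ℤ) + k = (r : ℤ) * ((k * (k + 1) / 2 : ℕ) : ℤ) := by
      have := congrArg (Nat.cast : ℕ → ℤ) hTsum
      push_cast at this
      push_cast
      linarith
    linarith
  rw [harg]
  have hcard : Nat.card {lam : Nat.Partition n //
        (k : ℕ∞) ≤ gap r lam ∧ (k : ℕ∞) < gap (r - 1) lam}
      = Nat.card {lam : Nat.Partition n // Mset r k ≤ lam.parts} :=
    Nat.card_congr (Equiv.subtypeEquivRight (fun lam => cond_iff r k hr lam))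
  rw [hcard]
  rcases le_or_gt ((Mset r k).sum) n with hle | hlt
  · rw [pI, if_pos (by omega)]
    have ht : ((n : ℤ) - ((Mset r k).sum : ℤ)).toNat = n - (Mset r k).sum := by omega
    rw [ht]
    exact (Nat.card_congr (partEquiv r k n hle)).symm
  · rw [pI, if_neg (by omega)]
    have hempty : IsEmpty {lam : Nat.Partition n // Mset r k ≤ lam.parts} := by
      refine ⟨fun x => ?_⟩
      obtain ⟨lam, hlam⟩ := x
      obtain ⟨u, hu⟩ := Multiset.le_iff_exists_add.mp hlam
      have hs := lam.parts_sum
      rw [hu, Multiset.sum_add] at hs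
      omega
    rw [Nat.card_of_isEmpty]
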